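/- Let Erfc : ℂ → ℂ be the entire function Erfc(z) = √π/2 − ∫_{[0,z]} e^{−w²} dw. Then for every ε with 0 < ε < π/4, |Erfc(z)| → +∞ as z → ∞ in the sector π/4 + ε < arg z ≤ π/2; that is, for every M > 0 there exists R > 0 such that every z ∈ ℂ with |z| ≥ R and π/4 + ε < arg z ≤ π/2 satisfies |Erfc(z)| ≥ M. -/

import Mathlib

set_option maxHeartbeats 1000000

open Complex intervalIntegral

/-- The entire complementary error function
`Erfc(z) = √π/2 - ∫_{[0,z]} e^{-w²} dw`, the integral being taken along the
segment from `0` to `z`, parametrized by `w = t z`, `t ∈ [0,1]`. -/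
noncomputable def CErfc (z : ℂ) : ℂ :=
  (Real.sqrt Real.pi : ℂ) / 2 - ∫ t in (0:ℝ)..1, z * Complex.exp (-((t : ℂ) * z) ^ 2)

lemma deriv_aux (z : ℂ) (hz : z ≠ 0) (t : ℝ) (ht : t ≠ 0) :
    HasDerivAt (fun t : ℝ => -Complex.exp (-((t:ℂ) * z) ^ 2) / (2 * (t:ℂ) * z))
      (z * Complex.exp (-((t:ℂ) * z) ^ 2)
        + Complex.exp (-((t:ℂ) * z) ^ 2) / (2 * (t:ℂ) ^ 2 * z)) t := by
  have h1 : HasDerivAt (fun t : ℝ => (t:ℂ)) 1 t := by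
    simpa using (hasDerivAt_id t).ofReal_comp
  have hmul : HasDerivAt (fun t : ℝ => (t:ℂ) * z) z t := by
    simpa using h1.mul_const z
  have hsq : HasDerivAt (fun t : ℝ => -((t:ℂ) * z) ^ 2) (-(2 * ((t:ℂ)*z) * z)) t := by
    rw [show (fun t:ℝ => -((t:ℂ)*z)^2) = (fun t:ℝ => -(((t:ℂ)*z)*((t:ℂ)*z)))
      from funext fun t => by ring]
    exact (hmul.fun_mul hmul).fun_neg.congr_deriv (by ring)
  have hexp : HasDerivAt (fun t : ℝ => Complex.exp (-((t:ℂ) * z) ^ 2))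
      (Complex.exp (-((t:ℂ)*z)^2) * (-(2 * ((t:ℂ)*z) * z))) t := hsq.cexp
  have hnum : HasDerivAt (fun t : ℝ => -Complex.exp (-((t:ℂ) * z) ^ 2))
      (-(Complex.exp (-((t:ℂ)*z)^2) * (-(2 * ((t:ℂ)*z) * z)))) t := hexp.neg
  have hden : HasDerivAt (fun t : ℝ => 2 * (t:ℂ) * z) (2 * z) t := by
    simpa [mul_assoc] using (h1.const_mul 2).mul_const z
  have hdz : 2 * (t:ℂ) * z ≠ 0 := by
    simp [hz, Complex.ofReal_ne_zero.mpr ht]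
  have := hnum.fun_div hden hdz
  refine this.congr_deriv ?_
  have htc : (t:ℂ) ≠ 0 := Complex.ofReal_ne_zero.mpr ht
  field_simp
  ring

lemma cont1 (z : ℂ) : Continuous fun t : ℝ => z * Complex.exp (-((t:ℂ) * z) ^ 2) := by
  fun_prop

lemma cont2 (z : ℂ) (hz : z ≠ 0) :
    ContinuousOn (fun t : ℝ => Complex.exp (-((t:ℂ) * z) ^ 2) / (2 * (t:ℂ) ^ 2 * z))
      (Set.uIcc (3/4 : ℝ) 1) := by
  apply ContinuousOn.div
  · fun_prop
  · fun_prop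
  · intro t ht
    rw [Set.uIcc_of_le (by norm_num : (3/4:ℝ) ≤ 1)] at ht
    have htne : (t:ℂ) ≠ 0 := by
      exact_mod_cast ne_of_gt (lt_of_lt_of_le (by norm_num) ht.1)
    intro h
    rcases mul_eq_zero.mp h with h | h
    · rcases mul_eq_zero.mp h with h | h
      · norm_num at h
      · exact pow_ne_zero 2 htne h
    · exact hz h

lemma ibp (z : ℂ) (hz : z ≠ 0) :
    ∫ t in (3/4:ℝ)..1, z * Complex.exp (-((t:ℂ) * z) ^ 2)
      = (-Complex.exp (-z^2) / (2*z) + Complex.exp (-(9/16 : ℂ) * z^2) / ((3/2)*z))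
        - ∫ t in (3/4:ℝ)..1, Complex.exp (-((t:ℂ) * z) ^ 2) / (2 * (t:ℂ) ^ 2 * z) := by
  have hint1 : IntervalIntegrable (fun t : ℝ => z * Complex.exp (-((t:ℂ) * z) ^ 2))
      MeasureTheory.volume (3/4 : ℝ) 1 := (cont1 z).intervalIntegrable _ _
  have hint2 : IntervalIntegrable
      (fun t : ℝ => Complex.exp (-((t:ℂ) * z) ^ 2) / (2 * (t:ℂ) ^ 2 * z))
      MeasureTheory.volume (3/4 : ℝ) 1 := (cont2 z hz).intervalIntegrable
  have key := intervalIntegral.integral_eq_sub_of_hasDerivAt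
      (f := fun t : ℝ => -Complex.exp (-((t:ℂ) * z) ^ 2) / (2 * (t:ℂ) * z))
      (f' := fun t : ℝ => z * Complex.exp (-((t:ℂ) * z) ^ 2)
        + Complex.exp (-((t:ℂ) * z) ^ 2) / (2 * (t:ℂ) ^ 2 * z))
      (fun t ht => by
        apply deriv_aux z hz
        rw [Set.uIcc_of_le (by norm_num : (3/4:ℝ) ≤ 1)] at ht
        exact ne_of_gt (lt_of_lt_of_le (by norm_num) ht.1))
      (hint1.add hint2)
  rw [intervalIntegral.integral_add hint1 hint2] at key
  push_cast at key
  rw [show (-((1 : ℂ) * z) ^ 2) = -z^2 by ring,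
    show (-((3/4 : ℂ) * z) ^ 2) = -(9/16:ℂ) * z^2 by ring] at key
  linear_combination key

lemma quad_le_exp (y : ℝ) (hy : 0 ≤ y) : y^2/4 ≤ Real.exp y := by
  have h := Real.add_one_le_exp (y/2)
  have h2 : Real.exp y = Real.exp (y/2) * Real.exp (y/2) := by
    rw [← Real.exp_add]; ring_nf
  nlinarith [Real.exp_pos (y/2)]

lemma norm_exp_aux (z : ℂ) (t : ℝ) :
    ‖Complex.exp (-((t:ℂ)*z)^2)‖ = Real.exp (t^2 * (-(z^2).re)) := by
  rw [Complex.norm_exp]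
  congr 1
  have h : -((t:ℂ)*z)^2 = ((t^2:ℝ):ℂ) * (-(z^2)) := by push_cast; ring
  rw [h, Complex.re_ofReal_mul, Complex.neg_re]

/-- `|Erfc(z)| → +∞` as `z → ∞` in the sector `π/4 + ε < arg z ≤ π/2`. -/
theorem statement19 :
    ∀ ε : ℝ, 0 < ε → ε < Real.pi / 4 →
      ∀ M : ℝ, 0 < M → ∃ R > (0:ℝ), ∀ z : ℂ, R ≤ ‖z‖ →
        Real.pi / 4 + ε < Complex.arg z → Complex.arg z ≤ Real.pi / 2 →
        M ≤ ‖CErfc z‖ := by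
  intro ε hε hε' M hM
  have hpi := Real.pi_pos
  set s : ℝ := Real.sin (2*ε) with hs
  clear_value s
  have hspos : 0 < s := by
    rw [hs]; exact Real.sin_pos_of_pos_of_lt_pi (by linarith) (by linarith)
  have hs1 : s ≤ 1 := by rw [hs]; exact Real.sin_le_one _
  set K : ℝ := (36/5) * (M + Real.sqrt Real.pi / 2) with hK
  clear_value K
  have hKpos : 0 < K := by
    have h := Real.sqrt_nonneg Real.pi
    rw [hK]
    have h2 := Real.sqrt_nonneg Real.pi
    nlinarith only [h, hM, h2]
  refine ⟨max (18/s) (4*K/s^2), lt_max_of_lt_left (div_pos (by norm_num) hspos), ?_⟩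
  intro z hzR hθ1 hθ2
  set r : ℝ := ‖z‖ with hrdef
  clear_value r
  have hr18 : 18/s ≤ r := le_trans (le_max_left _ _) hzR
  have hrK : 4*K/s^2 ≤ r := le_trans (le_max_right _ _) hzR
  have hr0 : 0 < r := lt_of_lt_of_le (by positivity) hr18
  have hz : z ≠ 0 := by
    intro h
    rw [hrdef, h, norm_zero] at hr0
    exact lt_irrefl 0 hr0
  have hsr : 18 ≤ s * r := by
    rw [div_le_iff₀ hspos] at hr18; linarith [hr18]
  have hr1 : 1 ≤ r := by
    have h1 : 0 ≤ (1 - s) * r := mul_nonneg (by linarith only [hs1]) hr0.le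
    linarith only [h1, hsr, hs1, hspos]
  have h4K : 4*K ≤ s^2 * r := by
    rw [div_le_iff₀ (by positivity : (0:ℝ) < s^2)] at hrK; linarith
  -- bounds on a = -(z²).re
  have habs : ‖z‖ = r := by rw [hrdef]
  set θ : ℝ := Complex.arg z with hθ
  clear_value θ
  have hre : z.re = r * Real.cos θ := by
    rw [hθ, Complex.cos_arg hz, habs]
    field_simp
  have him : z.im = r * Real.sin θ := by
    rw [hθ, Complex.sin_arg, habs]
    field_simp
  have hcos : (z^2).re = r^2 * Real.cos (2*θ) := by
    rw [Real.cos_two_mul', pow_two, Complex.mul_re, hre, him]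
    ring
  have h2θ : Real.cos (2*θ) ≤ Real.cos (Real.pi/2 + 2*ε) :=
    Real.cos_le_cos_of_nonneg_of_le_pi (by linarith) (by linarith) (by linarith)
  have hcosval : Real.cos (Real.pi/2 + 2*ε) = -s := by
    rw [Real.cos_add]; simp [hs]
  set a : ℝ := -(z^2).re with ha_def
  clear_value a
  have ha : s * r^2 ≤ a := by
    rw [ha_def, hcos]
    rw [hcosval] at h2θ
    have h1 : 0 ≤ (-s - Real.cos (2*θ)) * r^2 :=
      mul_nonneg (by linarith only [h2θ]) (sq_nonneg r)
    linarith only [h1]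
  have ha2 : a ≤ r^2 := by
    rw [ha_def, hcos]
    have h1 : 0 ≤ (Real.cos (2*θ) + 1) * r^2 :=
      mul_nonneg (by linarith only [Real.neg_one_le_cos (2*θ)]) (sq_nonneg r)
    linarith only [h1]
  have ha0 : 0 < a := lt_of_lt_of_le (by positivity) ha
  -- growth conditions
  have hC1 : 15*r^2 ≤ Real.exp (7*s*r^2/16) := by
    refine le_trans ?_ (quad_le_exp _ (by positivity))
    have h324 : 324 ≤ (s*r)^2 := by
      nlinarith only [hsr, sq_nonneg (s*r - 18)]
    have h2 : 324 * r^2 ≤ (s*r)^2 * r^2 :=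
      mul_le_mul_of_nonneg_right h324 (sq_nonneg r)
    linarith only [h2, sq_nonneg r]
  have hC2 : K * r ≤ Real.exp (s*r^2) := by
    refine le_trans ?_ (quad_le_exp _ (by positivity))
    have hr3 : r ≤ r^3 := by
      calc r = r^1 := (pow_one r).symm
        _ ≤ r^3 := pow_le_pow_right₀ hr1 (by norm_num)
    have h2 := mul_le_mul_of_nonneg_right h4K (by positivity : (0:ℝ) ≤ r^3)
    have h3 : K * r ≤ K * r^3 := mul_le_mul_of_nonneg_left hr3 hKpos.le
    nlinarith only [h2, h3]
  -- abbreviations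
  set X : ℝ := Real.exp a with hX
  clear_value X
  set Y : ℝ := Real.exp ((9/16)*a) with hY
  clear_value Y
  set E7 : ℝ := Real.exp ((7/16)*a) with hE7
  clear_value E7
  have hXpos : 0 < X := by rw [hX]; exact Real.exp_pos _
  have hYpos : 0 < Y := by rw [hY]; exact Real.exp_pos _
  have hXYE : X = Y * E7 := by rw [hX, hY, hE7, ← Real.exp_add]; ring_nf
  have hW : 15*r^2 ≤ E7 := by
    rw [hE7]
    exact le_trans hC1 (Real.exp_le_exp.mpr (by nlinarith))
  have hXs : Real.exp (s*r^2) ≤ X := by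
    rw [hX]; exact Real.exp_le_exp.mpr (by linarith)
  -- integral split and bounds
  have hsplit : (∫ t in (0:ℝ)..1, z * Complex.exp (-((t:ℂ) * z) ^ 2))
      = (∫ t in (0:ℝ)..(3/4), z * Complex.exp (-((t:ℂ) * z) ^ 2))
        + ∫ t in (3/4:ℝ)..1, z * Complex.exp (-((t:ℂ) * z) ^ 2) :=
    (intervalIntegral.integral_add_adjacent_intervals
      ((cont1 z).intervalIntegrable _ _) ((cont1 z).intervalIntegrable _ _)).symm
  have hI1 : ‖∫ t in (0:ℝ)..(3/4), z * Complex.exp (-((t:ℂ) * z) ^ 2)‖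
      ≤ (3/4) * (r * Y) := by
    have hb := intervalIntegral.norm_integral_le_of_norm_le_const
      (C := r * Y) (a := (0:ℝ)) (b := 3/4)
      (f := fun t : ℝ => z * Complex.exp (-((t:ℂ) * z) ^ 2)) ?_
    · rw [show |((3:ℝ)/4 - 0)| = 3/4 by norm_num] at hb
      linarith
    · intro t ht
      rw [Set.uIoc_of_le (by norm_num : (0:ℝ) ≤ 3/4)] at ht
      rw [norm_mul, norm_exp_aux, ← ha_def, ← hrdef]
      have ht2 : t^2 * a ≤ (9/16) * a := by
        have h1 : (0:ℝ) ≤ (3/4 - t) * (3/4 + t) * a :=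
          mul_nonneg (mul_nonneg (by linarith [ht.2]) (by linarith [ht.1.le])) ha0.le
        linarith only [h1]
      have := Real.exp_le_exp.mpr ht2
      rw [← hY] at this
      exact mul_le_mul_of_nonneg_left this hr0.le
  have hJ : ‖∫ t in (3/4:ℝ)..1, Complex.exp (-((t:ℂ) * z) ^ 2) / (2 * (t:ℂ) ^ 2 * z)‖
      ≤ (2/9) * (X/r) := by
    have hb := intervalIntegral.norm_integral_le_of_norm_le_const
      (C := (8/9) * (X/r)) (a := (3/4:ℝ)) (b := 1)
      (f := fun t : ℝ => Complex.exp (-((t:ℂ) * z) ^ 2) / (2 * (t:ℂ) ^ 2 * z)) ?_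
    · rw [show |((1:ℝ) - 3/4)| = 1/4 by norm_num] at hb
      linarith
    · intro t ht
      rw [Set.uIoc_of_le (by norm_num : (3/4:ℝ) ≤ 1)] at ht
      have ht0 : (0:ℝ) < t := lt_of_lt_of_le (by norm_num) ht.1.le
      rw [norm_div, norm_exp_aux, ← ha_def, norm_mul, norm_mul]
      have h2 : ‖(2:ℂ)‖ = 2 := by norm_num
      have h3 : ‖((t:ℂ))^2‖ = t^2 := by
        rw [norm_pow, Complex.norm_real, Real.norm_of_nonneg ht0.le]
      rw [h2, h3, ← hrdef]
      have hnum : Real.exp (t^2*a) ≤ X := by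
        rw [hX]
        refine Real.exp_le_exp.mpr ?_
        have h1 : (0:ℝ) ≤ (1 - t) * (1 + t) * a :=
          mul_nonneg (mul_nonneg (by linarith only [ht.2]) (by linarith only [ht.1.le])) ha0.le
        linarith only [h1]
      have hden : (9/8) * r ≤ 2 * t^2 * r := by
        have h1 : (0:ℝ) ≤ (t - 3/4) * (t + 3/4) * r :=
          mul_nonneg (mul_nonneg (by linarith only [ht.1.le]) (by linarith only [ht.1.le])) hr0.le
        linarith only [h1]
      calc Real.exp (t^2*a) / (2 * t^2 * r) ≤ X / ((9/8)*r) :=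
            div_le_div₀ hXpos.le hnum (by positivity) hden
        _ = (8/9) * (X/r) := by ring
  -- norms of explicit terms
  have hEnorm : ‖Complex.exp (-z^2) / (2*z)‖ = (1/2) * (X/r) := by
    rw [norm_div, norm_mul, Complex.norm_exp]
    have : (-z^2).re = a := by rw [ha_def, Complex.neg_re]
    rw [this, ← hX, ← hrdef]
    have h2 : ‖(2:ℂ)‖ = 2 := by norm_num
    rw [h2]; ring
  have hBnorm : ‖Complex.exp (-(9/16:ℂ) * z^2) / ((3/2)*z)‖ ≤ (2/3) * Y := by
    rw [norm_div, norm_mul, Complex.norm_exp]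
    have harg : (-(9/16:ℂ) * z^2).re = (9/16)*a := by
      have : -(9/16:ℂ) * z^2 = (((-9/16:ℝ)):ℂ) * z^2 := by norm_num
      rw [this, Complex.re_ofReal_mul, ha_def]; ring
    rw [harg, ← hY, ← hrdef]
    have h32 : ‖((3:ℂ)/2)‖ = 3/2 := by norm_num
    rw [h32]
    rw [div_le_iff₀ (by positivity)]
    have h1 : 0 ≤ Y * (r - 1) := mul_nonneg hYpos.le (by linarith only [hr1])
    linarith only [h1]
  -- decomposition
  have hdecomp : CErfc z = Complex.exp (-z^2) / (2*z)
      + ((Real.sqrt Real.pi : ℂ) / 2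
        - (∫ t in (0:ℝ)..(3/4), z * Complex.exp (-((t:ℂ) * z) ^ 2))
        - Complex.exp (-(9/16:ℂ) * z^2) / ((3/2)*z)
        + ∫ t in (3/4:ℝ)..1, Complex.exp (-((t:ℂ) * z) ^ 2) / (2 * (t:ℂ) ^ 2 * z)) := by
    unfold CErfc
    rw [hsplit, ibp z hz]
    ring
  have hπ : ‖((Real.sqrt Real.pi : ℝ) : ℂ) / 2‖ = Real.sqrt Real.pi / 2 := by
    rw [norm_div]
    rw [Complex.norm_real, Real.norm_of_nonneg (Real.sqrt_nonneg _)]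
    norm_num
  -- lower bound for the norm
  have hlow : (1/2) * (X/r)
      - (Real.sqrt Real.pi / 2 + (3/4) * (r*Y) + (2/3)*Y + (2/9)*(X/r))
      ≤ ‖CErfc z‖ := by
    rw [hdecomp]
    have h1 := norm_sub_norm_le (Complex.exp (-z^2) / (2*z))
      (-((Real.sqrt Real.pi : ℂ) / 2
        - (∫ t in (0:ℝ)..(3/4), z * Complex.exp (-((t:ℂ) * z) ^ 2))
        - Complex.exp (-(9/16:ℂ) * z^2) / ((3/2)*z)
        + ∫ t in (3/4:ℝ)..1, Complex.exp (-((t:ℂ) * z) ^ 2) / (2 * (t:ℂ) ^ 2 * z)))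
    rw [sub_neg_eq_add, norm_neg] at h1
    have h2 : ‖(Real.sqrt Real.pi : ℂ) / 2
        - (∫ t in (0:ℝ)..(3/4), z * Complex.exp (-((t:ℂ) * z) ^ 2))
        - Complex.exp (-(9/16:ℂ) * z^2) / ((3/2)*z)
        + ∫ t in (3/4:ℝ)..1, Complex.exp (-((t:ℂ) * z) ^ 2) / (2 * (t:ℂ) ^ 2 * z)‖
        ≤ Real.sqrt Real.pi / 2 + (3/4) * (r*Y) + (2/3)*Y + (2/9)*(X/r) := by
      calc _ ≤ ‖(Real.sqrt Real.pi : ℂ) / 2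
            - (∫ t in (0:ℝ)..(3/4), z * Complex.exp (-((t:ℂ) * z) ^ 2))
            - Complex.exp (-(9/16:ℂ) * z^2) / ((3/2)*z)‖
            + ‖∫ t in (3/4:ℝ)..1, Complex.exp (-((t:ℂ) * z) ^ 2) / (2 * (t:ℂ) ^ 2 * z)‖ :=
          norm_add_le _ _
        _ ≤ (‖(Real.sqrt Real.pi : ℂ) / 2
            - (∫ t in (0:ℝ)..(3/4), z * Complex.exp (-((t:ℂ) * z) ^ 2))‖
            + ‖Complex.exp (-(9/16:ℂ) * z^2) / ((3/2)*z)‖)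
            + ‖∫ t in (3/4:ℝ)..1, Complex.exp (-((t:ℂ) * z) ^ 2) / (2 * (t:ℂ) ^ 2 * z)‖ := by
          gcongr
          exact norm_sub_le _ _
        _ ≤ ((‖((Real.sqrt Real.pi : ℝ) : ℂ) / 2‖
            + ‖∫ t in (0:ℝ)..(3/4), z * Complex.exp (-((t:ℂ) * z) ^ 2)‖)
            + ‖Complex.exp (-(9/16:ℂ) * z^2) / ((3/2)*z)‖)
            + ‖∫ t in (3/4:ℝ)..1, Complex.exp (-((t:ℂ) * z) ^ 2) / (2 * (t:ℂ) ^ 2 * z)‖ := by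
          gcongr
          exact norm_sub_le _ _
        _ ≤ _ := by
          rw [hπ]
          linarith only [hI1, hBnorm, hJ]
    linarith only [h1, h2, hEnorm.symm.le, hEnorm.le]
  -- final arithmetic
  have h2rY : 2*(r*Y) ≤ (5/36) * (X/r) := by
    rw [show (5/36) * (X/r) = (5*X)/(36*r) by ring,
      le_div_iff₀ (by positivity : (0:ℝ) < 36*r), hXYE]
    have h2 := mul_le_mul_of_nonneg_left hW hYpos.le
    have h3 : 0 ≤ Y * r^2 := mul_nonneg hYpos.le (sq_nonneg r)
    nlinarith only [h2, h3]
  have hsmall : (3/4) * (r*Y) + (2/3)*Y ≤ 2*(r*Y) := by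
    have h1 : 0 ≤ Y * (r - 1) := mul_nonneg hYpos.le (by linarith only [hr1])
    linarith only [h1, hYpos]
  have hfin : M + Real.sqrt Real.pi / 2 ≤ (5/36) * (X/r) := by
    rw [show (5/36) * (X/r) = (5*X)/(36*r) by ring,
      le_div_iff₀ (by positivity : (0:ℝ) < 36*r)]
    have : K * r ≤ X := le_trans hC2 hXs
    rw [hK] at this
    linarith only [this]
  linarith only [hlow, h2rY, hsmall, hfin]
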